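/- Let T' ≥ 1, Δ > 0, σ > 0, δ ∈ (0,1), and set w = ln(e + √(T'Δ²/σ²)/δ) and ε = T'Δ²/(2σ²) + √(2T'Δ²w/σ²). If the log-likelihood-ratio random variable Z satisfies E₀[exp(λZ)] ≤ exp((λ²+λ)T'Δ²/(2σ²)) for all λ > 0, then P₁(S) - e^ε·P₀(S) ≤ δ for every measurable set S, where P₁(S) - e^ε P₀(S) ≤ E₀[exp(λ(Z - ε) + λ ln λ - (λ+1) ln(λ+1))] for the choice λ = (2εσ²/(T'Δ²) - 1)/2 > 0. -/

import Mathlib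

open MeasureTheory

set_option maxHeartbeats 1000000 in
theorem stmt14 {Ω : Type*} [MeasurableSpace Ω]
    (P₀ P₁ : Measure Ω) [IsProbabilityMeasure P₀] [IsProbabilityMeasure P₁]
    (T' Δ σ δ : ℝ) (hT : 1 ≤ T') (hΔ : 0 < Δ) (hσ : 0 < σ)
    (hδ0 : 0 < δ) (hδ1 : δ < 1)
    (Z : Ω → ℝ) (w ε lam : ℝ)
    (hw : w = Real.log (Real.exp 1 + Real.sqrt (T' * Δ ^ 2 / σ ^ 2) / δ))
    (hε : ε = T' * Δ ^ 2 / (2 * σ ^ 2) + Real.sqrt (2 * T' * Δ ^ 2 * w / σ ^ 2))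
    (hlam : lam = (2 * ε * σ ^ 2 / (T' * Δ ^ 2) - 1) / 2)
    (hmgf : ∀ l : ℝ, 0 < l →
      ∫ ω, Real.exp (l * Z ω) ∂P₀ ≤ Real.exp ((l ^ 2 + l) * T' * Δ ^ 2 / (2 * σ ^ 2)))
    (hS : ∀ S : Set Ω, MeasurableSet S →
      (P₁ S).toReal - Real.exp ε * (P₀ S).toReal ≤
        ∫ ω, Real.exp (lam * (Z ω - ε) + lam * Real.log lam -
          (lam + 1) * Real.log (lam + 1)) ∂P₀) :
    0 < lam ∧
    ∀ S : Set Ω, MeasurableSet S →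
      (P₁ S).toReal - Real.exp ε * (P₀ S).toReal ≤ δ := by
  have hσ2 : (0:ℝ) < σ ^ 2 := by positivity
  have hTΔ : (0:ℝ) < T' * Δ ^ 2 := by nlinarith [sq_nonneg Δ, hΔ.le]
  set a : ℝ := T' * Δ ^ 2 / (2 * σ ^ 2) with ha_def
  have ha : 0 < a := by positivity
  set s : ℝ := Real.sqrt (T' * Δ ^ 2 / σ ^ 2) with hs_def
  have hs_eq : s = Real.sqrt (2 * a) := by
    rw [hs_def]; congr 1; field_simp [ha_def]; rw [ha_def]; field_simp
  have hs_pos : 0 < s := by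
    rw [hs_eq]; exact Real.sqrt_pos.mpr (by positivity)
  have hw1 : 1 ≤ w := by
    rw [hw]
    rw [Real.le_log_iff_exp_le (by positivity)]
    nlinarith [div_pos hs_pos hδ0]
  have hw0 : 0 < w := by linarith
  have hsw : (0:ℝ) < Real.sqrt w := Real.sqrt_pos.mpr hw0
  have hsa : (0:ℝ) < Real.sqrt a := Real.sqrt_pos.mpr ha
  have hsw2 : Real.sqrt w ^ 2 = w := Real.sq_sqrt hw0.le
  have hsa2 : Real.sqrt a ^ 2 = a := Real.sq_sqrt ha.le
  have hε' : ε = a + 2 * Real.sqrt a * Real.sqrt w := by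
    rw [hε]
    have h4 : 2 * T' * Δ ^ 2 * w / σ ^ 2 = (2 * Real.sqrt a * Real.sqrt w) ^ 2 := by
      have h4a : (2 * Real.sqrt a * Real.sqrt w) ^ 2
          = 4 * (Real.sqrt a ^ 2) * (Real.sqrt w ^ 2) := by ring
      rw [hsa2, hsw2] at h4a
      rw [h4a, ha_def]; field_simp; ring
    rw [h4, Real.sqrt_sq (by positivity)]
  have hlam' : lam = Real.sqrt w / Real.sqrt a := by
    have haε : 2 * ε * σ ^ 2 / (T' * Δ ^ 2) = ε / a := by
      rw [ha_def]; field_simp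
    rw [hlam, haε, hε']
    rw [div_eq_div_iff (by norm_num) hsa.ne']
    field_simp
    nlinarith [hsa2]
  have hlam_pos : 0 < lam := by rw [hlam']; positivity
  refine ⟨hlam_pos, fun S hSm => ?_⟩
  refine le_trans (hS S hSm) ?_
  set K : ℝ := -(lam * ε) + lam * Real.log lam - (lam + 1) * Real.log (lam + 1) with hK
  have hrw : ∀ ω, Real.exp (lam * (Z ω - ε) + lam * Real.log lam -
      (lam + 1) * Real.log (lam + 1)) = Real.exp (lam * Z ω) * Real.exp K := by
    intro ω; rw [← Real.exp_add, hK]; ring_nf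
  calc ∫ ω, Real.exp (lam * (Z ω - ε) + lam * Real.log lam -
          (lam + 1) * Real.log (lam + 1)) ∂P₀
      = ∫ ω, Real.exp (lam * Z ω) * Real.exp K ∂P₀ := by
        exact integral_congr_ae (Filter.Eventually.of_forall hrw)
    _ = (∫ ω, Real.exp (lam * Z ω) ∂P₀) * Real.exp K := integral_mul_const _ _
    _ ≤ Real.exp ((lam ^ 2 + lam) * T' * Δ ^ 2 / (2 * σ ^ 2)) * Real.exp K := by
        exact mul_le_mul_of_nonneg_right (hmgf lam hlam_pos) (Real.exp_pos K).le
    _ = Real.exp ((lam ^ 2 + lam) * T' * Δ ^ 2 / (2 * σ ^ 2) + K) := (Real.exp_add _ _).symm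
    _ ≤ Real.exp (Real.log δ) := by
        apply Real.exp_le_exp.mpr
        -- main exponent inequality
        have hexp1 : (lam ^ 2 + lam) * T' * Δ ^ 2 / (2 * σ ^ 2) = (lam ^ 2 + lam) * a := by
          rw [ha_def]; field_simp
        have hlama : lam * Real.sqrt a = Real.sqrt w := by
          rw [hlam']; field_simp
        have hlam2a : lam ^ 2 * a = w := by
          calc lam ^ 2 * a = (lam * Real.sqrt a) ^ 2 := by rw [mul_pow, hsa2]
            _ = w := by rw [hlama, hsw2]
        have hww : Real.sqrt w * Real.sqrt w = w := Real.mul_self_sqrt hw0.le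
        have hlamε : lam * ε = lam * a + 2 * w := by
          calc lam * ε = lam * a + 2 * ((lam * Real.sqrt a) * Real.sqrt w) := by
                rw [hε']; ring
            _ = lam * a + 2 * w := by rw [hlama, hww]
        have hstep1 : (lam ^ 2 + lam) * a + K = -w + (lam * Real.log lam -
            (lam + 1) * Real.log (lam + 1)) := by
          rw [hK]; linear_combination hlam2a - hlamε
        -- bound lam*log lam - (lam+1)*log(lam+1) ≤ -log(lam+1)
        have hB : lam * Real.log lam - (lam + 1) * Real.log (lam + 1) ≤
            -Real.log (lam + 1) := by
          have h1 : Real.log lam ≤ Real.log (lam + 1) :=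
            Real.log_le_log hlam_pos (by linarith)
          have h2 := mul_le_mul_of_nonneg_left h1 hlam_pos.le
          have h3 : lam * Real.log (lam + 1) - (lam + 1) * Real.log (lam + 1)
              = -Real.log (lam + 1) := by ring
          linarith
        -- bound -log(lam+1) ≤ log δ + w
        have hC : -Real.log (lam + 1) ≤ Real.log δ + w := by
          have hδs : Real.log δ + w = Real.log (δ * Real.exp 1 + s) := by
            rw [hw, ← Real.log_mul hδ0.ne' (by positivity)]
            congr 1
            field_simp
          rw [hδs, neg_le, ← Real.log_inv]
          apply Real.log_le_log (by positivity)
          -- (δe + s)⁻¹ ≤ lam + 1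
          have hinv : (δ * Real.exp 1 + s)⁻¹ ≤ s⁻¹ := by
            apply inv_anti₀ hs_pos
            nlinarith [Real.exp_pos 1]
          have hsa_le_s : Real.sqrt a ≤ s := by
            rw [hs_eq]; exact Real.sqrt_le_sqrt (by linarith)
          have hsinv : s⁻¹ ≤ (Real.sqrt a)⁻¹ := by
            exact inv_anti₀ hsa hsa_le_s
          have hlam_ge : (Real.sqrt a)⁻¹ ≤ lam := by
            rw [hlam']
            rw [div_eq_mul_inv]
            nlinarith [Real.sqrt_le_sqrt hw1, Real.sqrt_one, inv_pos.mpr hsa]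
          linarith
        rw [hexp1, hstep1]
        linarith
    _ = δ := Real.exp_log hδ0
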